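/- Let U, V, W be open subsets of ℂ, f : U → V and g : V → W biholomorphisms, and let T_V, T_W be integral operators with kernels K_V(w, z), K_W(w, z) satisfying the equivariance K_W(g(w), g(z)) g'(w) g'(z) = K_V(w, z) for all w ≠ z. Then the corresponding operators on one-forms satisfy g^* ∘ T_W = T_V ∘ g^* on compactly supported antiholomorphic one-forms: for ᾱ = conj(h) dz̄ compactly supported in an open Ω ⊆ V, one has g^*(T_W (g^{-1})^* ᾱ) = T_V ᾱ, where (T ᾱ)(z) = ∬ K(w, z) conj(h(w)) dA(w) dz. -/

import Mathlib

open MeasureTheory Complex ComplexConjugate Set Filter Topology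

lemma det_restrictScalars_smulRight (c : ℂ) :
    (((1 : ℂ →L[ℂ] ℂ).smulRight c).restrictScalars ℝ).det = Complex.normSq c := by
  have h : ((((1 : ℂ →L[ℂ] ℂ).smulRight c).restrictScalars ℝ) : ℂ →ₗ[ℝ] ℂ)
      = Algebra.lmul ℝ ℂ c := by
    ext w
    simp [mul_comm]
  rw [ContinuousLinearMap.det, h, ← Algebra.norm_apply, Algebra.norm_complex_apply]

/-- Conformal invariance of Schiffer-type integral operators: if the kernels
satisfy `K_W(g(w), g(z)) g'(w) g'(z) = K_V(w, z)`, then `g^* ∘ T_W = T_V ∘ g^*`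
on compactly supported antiholomorphic one-forms `ᾱ = conj(h) dz̄`. -/
theorem schiffer_operator_conformal_invariance
    (U V W : Set ℂ) (hU : IsOpen U) (hV : IsOpen V) (hW : IsOpen W)
    (f : ℂ → ℂ) (hf : DifferentiableOn ℂ f U) (hfbij : Set.BijOn f U V)
    (g : ℂ → ℂ) (hg : DifferentiableOn ℂ g V) (hgbij : Set.BijOn g V W)
    (ginv : ℂ → ℂ) (hginv : ∀ w ∈ V, ginv (g w) = w)
    (KV KW : ℂ → ℂ → ℂ)
    (hker : ∀ w ∈ V, ∀ z ∈ V, w ≠ z →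
      KW (g w) (g z) * deriv g w * deriv g z = KV w z)
    (Ω : Set ℂ) (hΩ : IsOpen Ω) (hΩV : Ω ⊆ V)
    (h : ℂ → ℂ) (hh : Continuous h) (hsupp : HasCompactSupport h)
    (hsuppΩ : tsupport h ⊆ Ω)
    (hint : ∀ z ∈ V, IntegrableOn (fun w => KV w z * conj (h w)) Ω volume) :
    ∀ z ∈ V,
      (∫ w in g '' Ω, KW w (g z) * conj (h (ginv w)) * conj (deriv ginv w)) *
          deriv g z =
        ∫ w in Ω, KV w z * conj (h w) := by
  intro z hz
  have hginj : Set.InjOn g V := hgbij.injOn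
  have hgan : AnalyticOnNhd ℂ g V := hg.analyticOnNhd hV
  -- the derivative of `g` is not eventually zero at any point of `V`
  have hnotev : ∀ x ∈ V, ¬ (∀ᶠ y in 𝓝 x, deriv g y = 0) := by
    intro x hx hev
    obtain ⟨ε, hε, hball⟩ := Metric.mem_nhds_iff.1 (hev.and (hV.mem_nhds hx))
    have hx' : x + (ε / 2 : ℝ) ∈ Metric.ball x ε := by
      simp only [Metric.mem_ball, dist_eq, add_sub_cancel_left]
      rw [Complex.norm_real, Real.norm_eq_abs, abs_of_pos (by linarith)]
      linarith
    have hconst : g x = g (x + (ε / 2 : ℝ)) := by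
      refine (convex_ball x ε).is_const_of_fderivWithin_eq_zero
        (hg.mono (fun y hy => (hball hy).2)) ?_ (Metric.mem_ball_self hε) hx'
      intro y hy
      rw [fderivWithin_of_isOpen Metric.isOpen_ball hy]
      have hd : DifferentiableAt ℂ g y :=
        (hg y (hball hy).2).differentiableAt (hV.mem_nhds (hball hy).2)
      have h1 := hd.hasDerivAt
      rw [(hball hy).1] at h1
      have h2 := hasDerivAt_iff_hasFDerivAt.mp h1
      rw [h2.fderiv]
      ext w
      simp
    have heq : x = x + (ε / 2 : ℝ) :=
      hginj ((hball (Metric.mem_ball_self hε)).2) ((hball hx').2) hconst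
    have h0 : ((ε / 2 : ℝ) : ℂ) = 0 := by
      have := congrArg (fun t => t - x) heq
      simpa using this.symm
    rw [Complex.ofReal_eq_zero] at h0
    linarith
  -- strict derivative of `g` at points of `V`
  have hstrict : ∀ x ∈ V, HasStrictDerivAt g (deriv g x) x := by
    intro x hx
    obtain ⟨p, hp⟩ := hgan x hx
    have h1 := hp.hasStrictDerivAt
    have h2 := h1.hasDerivAt.deriv
    rw [← h2] at h1
    exact h1
  -- derivative of the inverse
  have hkey : ∀ x ∈ V, deriv g x ≠ 0 → deriv ginv (g x) = (deriv g x)⁻¹ := by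
    intro x hx hc
    have hev : ∀ᶠ w in 𝓝 x, ginv (g w) = w :=
      eventually_of_mem (hV.mem_nhds hx) hginv
    exact ((hstrict x hx).to_local_left_inverse hc hev).hasDerivAt.deriv
  -- the zero set of `deriv g` in `V` is countable, hence null
  have hZ : volume ({x | x ∈ V ∧ deriv g x = 0} : Set ℂ) = 0 := by
    have hcnt : ({x | x ∈ V ∧ deriv g x = 0} : Set ℂ).Countable := by
      refine (HereditarilyLindelof_LindelofSets _).countable
        (discreteTopology_subtype_iff.mpr ?_)
      intro x hx
      have han : AnalyticAt ℂ (deriv g) x := hgan.deriv x hx.1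
      rcases han.eventually_eq_zero_or_eventually_ne_zero with hev | hev
      · exact absurd hev (hnotev x hx.1)
      · exact inf_principal_eq_bot.mpr (hev.mono fun y hy hyZ => hy hyZ.2)
    exact hcnt.measure_zero _
  -- change of variables
  have hΩm : MeasurableSet Ω := hΩ.measurableSet
  set A : ℂ → (ℂ →L[ℝ] ℂ) :=
    fun x => ((1 : ℂ →L[ℂ] ℂ).smulRight (deriv g x)).restrictScalars ℝ with hA
  have hder : ∀ x ∈ Ω, HasFDerivWithinAt g (A x) Ω x := by
    intro x hx
    have hd : DifferentiableAt ℂ g x :=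
      (hg x (hΩV hx)).differentiableAt (hV.mem_nhds (hΩV hx))
    exact ((hasDerivAt_iff_hasFDerivAt.mp hd.hasDerivAt).restrictScalars ℝ).hasFDerivWithinAt
  have hcv := integral_image_eq_integral_abs_det_fderiv_smul volume hΩm hder
    (hginj.mono hΩV) (fun w => KW w (g z) * conj (h (ginv w)) * conj (deriv ginv w))
  rw [hcv, ← integral_mul_const]
  refine setIntegral_congr_ae hΩm ?_
  have hnull : volume ({x | x ∈ V ∧ deriv g x = 0} ∪ {z} : Set ℂ) = 0 :=
    measure_union_null hZ (measure_singleton z)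
  have hae : ∀ᵐ x ∂(volume : Measure ℂ),
      x ∉ ({x | x ∈ V ∧ deriv g x = 0} ∪ {z} : Set ℂ) := compl_mem_ae_iff.mpr hnull
  filter_upwards [hae] with x hxN hxΩ
  have hxV : x ∈ V := hΩV hxΩ
  have hc : deriv g x ≠ 0 := fun h0 => hxN (Or.inl ⟨hxV, h0⟩)
  have hxz : x ≠ z := fun hxz => hxN (Or.inr hxz)
  have hdet : (A x).det = Complex.normSq (deriv g x) := det_restrictScalars_smulRight _
  rw [hdet, _root_.abs_of_nonneg (normSq_nonneg _), hginv x hxV, hkey x hxV hc,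
    ← hker x hxV z hz hxz, Complex.real_smul, ← Complex.mul_conj, map_inv₀]
  have hcc : conj (deriv g x) ≠ 0 := by
    simpa using hc
  field_simp
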